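/- Any monotone linear relation A : X → 2^X with full domain (dom A = X) is maximal monotone and single-valued. -/

import Mathlib

/-- A monotone linear relation with full domain is maximal monotone and single-valued. -/
theorem monotone_linear_relation_full_domain
    {X : Type*} [NormedAddCommGroup X] [InnerProductSpace ℝ X] [CompleteSpace X]
    (A : X → Set X)
    (hlin : ∃ G : Submodule ℝ (X × X), ∀ x y, y ∈ A x ↔ (x, y) ∈ G)
    (hmono : ∀ x x' y y', x' ∈ A x → y' ∈ A y → (0:ℝ) ≤ inner ℝ (x - y) (x' - y'))
    (hdom : ∀ x : X, (A x).Nonempty) :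
    (∀ a a', (∀ x x', x' ∈ A x → (0:ℝ) ≤ inner ℝ (x - a) (x' - a')) → a' ∈ A a) ∧
    (∀ x : X, ∃! x', x' ∈ A x) := by
  obtain ⟨G, hG⟩ := hlin
  -- Key: if (a,a') is monotonically related to the graph and z' ∈ A a, then a' = z'.
  have key : ∀ a a' z', (∀ x x', x' ∈ A x → (0:ℝ) ≤ inner ℝ (x - a) (x' - a')) →
      z' ∈ A a → a' = z' := by
    intro a a' z' hrel hz'
    set v := a' - z' with hv
    obtain ⟨w', hw'⟩ := hdom v
    have hmem : ∀ t : ℝ, (z' + t • w') ∈ A (a + t • v) := by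
      intro t
      rw [hG]
      have h1 : ((a, z') : X × X) ∈ G := (hG a z').mp hz'
      have h2 : ((v, w') : X × X) ∈ G := (hG v w').mp hw'
      have := G.add_mem h1 (G.smul_mem t h2)
      simpa [Prod.smul_mk] using this
    set c : ℝ := inner ℝ v v with hc
    set d : ℝ := inner ℝ v w' with hd
    have hineq : ∀ t : ℝ, 0 ≤ t ^ 2 * d - t * c := by
      intro t
      have h := hrel (a + t • v) (z' + t • w') (hmem t)
      have e1 : a + t • v - a = t • v := by abel
      have e2 : z' + t • w' - a' = t • w' - v := by rw [hv]; abel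
      rw [e1, e2] at h
      have hcalc : (inner ℝ (t • v) (t • w' - v) : ℝ) = t ^ 2 * d - t * c := by
        rw [real_inner_smul_left, inner_sub_right, real_inner_smul_right, hc, hd]; ring
      linarith [hcalc ▸ h]
    have hc0 : c ≤ 0 := by
      by_contra hpos
      push_neg at hpos
      set t : ℝ := c / (|d| + 1) with htdef
      have hd1 : (0:ℝ) < |d| + 1 := by positivity
      have ht : 0 < t := div_pos hpos hd1
      have htd : t * d < c := by
        have h1 : t * d ≤ t * |d| := mul_le_mul_of_nonneg_left (le_abs_self d) ht.le
        have h2 : t * |d| < t * (|d| + 1) := by nlinarith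
        have h3 : t * (|d| + 1) = c := by rw [htdef]; exact div_mul_cancel₀ c hd1.ne'
        linarith
      nlinarith [hineq t, mul_pos ht (sub_pos.mpr htd)]
    have hceq : c = 0 := le_antisymm hc0 (by rw [hc]; exact real_inner_self_nonneg)
    have hv0 : v = 0 := by
      rwa [hc, inner_self_eq_zero] at hceq
    have := sub_eq_zero.mp (hv ▸ hv0)
    exact this
  constructor
  · intro a a' hrel
    obtain ⟨z', hz'⟩ := hdom a
    rw [key a a' z' hrel hz']
    exact hz'
  · intro x
    obtain ⟨z', hz'⟩ := hdom x
    refine ⟨z', hz', ?_⟩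
    intro y hy
    exact key x y z' (fun p p' hp' => hmono p p' x y hp' hy) hz'
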